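/- There exist absolute constants c > 0, C > 0 and an integer n₀ such that for every integer n ≥ n₀ there exists a polynomial M of degree at most n−1 with M(0) = 0 satisfying: (i) |Re M(e^{iθ})| ≤ 1 for all θ ∈ [0,2π); (ii) ∫₀^{2π} Re M(e^{iθ}) dθ = 0; and (iii) c log n ≤ sup_{θ ∈ [0,2π)} |Im M(e^{iθ})| ≤ C log n. -/

import Mathlib

open MeasureTheory Polynomial Real Set

noncomputable section

/-- Real version of the Taylor series of `-log(1-r)`. -/
lemma LogPoly.hasSum_real {r : ℝ} (h0 : 0 ≤ r) (h1 : r < 1) :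
    HasSum (fun k : ℕ => r ^ k / k) (-Real.log (1 - r)) := by
  have hz : ‖(r : ℂ)‖ < 1 := by
    simpa [Complex.norm_real, abs_of_nonneg h0] using h1
  have h := Complex.hasSum_taylorSeries_neg_log hz
  have h2 := h.mapL Complex.reCLM
  have e1 : (fun k : ℕ => Complex.reCLM ((r : ℂ) ^ k / k)) = fun k : ℕ => r ^ k / k := by
    funext k
    have : ((r : ℂ) ^ k / (k : ℂ)) = (((r ^ k / k : ℝ)) : ℂ) := by push_cast; ring
    rw [Complex.reCLM_apply, this, Complex.ofReal_re]
  have e2 : Complex.reCLM (-Complex.log (1 - (r : ℂ))) = -Real.log (1 - r) := by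
    have : (1 - (r : ℂ)) = (((1 - r : ℝ)) : ℂ) := by push_cast; ring
    rw [this, ← Complex.ofReal_log (by linarith)]
    simp
  rwa [e1, e2] at h2

/-- Tail bound for the logarithm series. -/
lemma LogPoly.tail_bound {r : ℝ} (h0 : 0 ≤ r) (h1 : r < 1) {w : ℂ} (hw : ‖w‖ ≤ r)
    {m : ℕ} (hm : 1 ≤ m) :
    ‖(-Complex.log (1 - w)) - ∑ k ∈ Finset.range m, w ^ k / k‖ ≤ r ^ m / (1 - r) / m := by
  have hw1 : ‖w‖ < 1 := lt_of_le_of_lt hw h1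
  have hs := Complex.hasSum_taylorSeries_neg_log hw1
  have hsum := hs.summable
  have key := Summable.sum_add_tsum_nat_add m hsum
  have heq : (-Complex.log (1 - w)) - ∑ k ∈ Finset.range m, w ^ k / k
      = ∑' i : ℕ, w ^ (i + m) / ((i + m : ℕ) : ℂ) := by
    rw [← hs.tsum_eq, ← key]; ring
  rw [heq]
  have hb : ∀ i : ℕ, ‖w ^ (i + m) / ((i + m : ℕ) : ℂ)‖ ≤ (r ^ m / m) * r ^ i := by
    intro i
    have hmpos : (0 : ℝ) < m := by exact_mod_cast hm
    have : ‖w ^ (i + m) / ((i + m : ℕ) : ℂ)‖ = ‖w‖ ^ (i + m) / ((i + m : ℕ) : ℝ) := by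
      rw [norm_div, norm_pow, Complex.norm_natCast]
    rw [this]
    have hstep : ‖w‖ ^ (i + m) / ((i + m : ℕ) : ℝ) ≤ r ^ (i + m) / (m : ℝ) := by
      gcongr <;> first
        | exact hw
        | exact_mod_cast Nat.le_add_left m i
    calc ‖w‖ ^ (i + m) / ((i + m : ℕ) : ℝ) ≤ r ^ (i + m) / (m : ℝ) := hstep
      _ = (r ^ m / m) * r ^ i := by rw [pow_add]; ring
  have hgsum : Summable fun i : ℕ => (r ^ m / m) * r ^ i :=
    (summable_geometric_of_lt_one h0 h1).mul_left _
  have hnorm_sum : Summable fun i : ℕ => ‖w ^ (i + m) / ((i + m : ℕ) : ℂ)‖ :=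
    Summable.of_nonneg_of_le (fun i => norm_nonneg _) hb hgsum
  have h3 : ‖∑' i : ℕ, w ^ (i + m) / ((i + m : ℕ) : ℂ)‖
      ≤ ∑' i : ℕ, ‖w ^ (i + m) / ((i + m : ℕ) : ℂ)‖ := norm_tsum_le_tsum_norm hnorm_sum
  have h4 : (∑' i : ℕ, ‖w ^ (i + m) / ((i + m : ℕ) : ℂ)‖)
      ≤ ∑' i : ℕ, (r ^ m / m) * r ^ i := Summable.tsum_le_tsum hb hnorm_sum hgsum
  have h5 : (∑' i : ℕ, (r ^ m / m) * r ^ i) = (r ^ m / m) * (1 - r)⁻¹ := by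
    rw [tsum_mul_left, tsum_geometric_of_lt_one h0 h1]
  have hend : ‖∑' i : ℕ, w ^ (i + m) / ((i + m : ℕ) : ℂ)‖ ≤ (r ^ m / m) * (1 - r)⁻¹ := by
    calc _ ≤ _ := h3
      _ ≤ _ := h4
      _ = _ := h5
  have hfin : (r ^ m / (m : ℝ)) * (1 - r)⁻¹ = r ^ m / (1 - r) / m := by
    rw [div_div, div_eq_mul_inv, div_eq_mul_inv, mul_inv]
    ring
  rw [← hfin]
  exact hend

/-- Existence of an analytic polynomial of degree at most `n−1` vanishing at `0`, whose
real part on the circle is bounded by `1` with zero mean, while its imaginary part has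
uniform norm of order `log n`. -/
theorem exists_log_polynomial :
    ∃ (c C : ℝ) (n₀ : ℕ), 0 < c ∧ 0 < C ∧
      ∀ n : ℕ, n₀ ≤ n →
        ∃ M : Polynomial ℂ,
          M.natDegree ≤ n - 1 ∧ M.coeff 0 = 0 ∧
          (∀ θ ∈ Set.Ico (0 : ℝ) (2 * π),
            |(M.eval (Complex.exp (θ * Complex.I))).re| ≤ 1) ∧
          (∫ θ in Set.Ico (0 : ℝ) (2 * π),
            (M.eval (Complex.exp (θ * Complex.I))).re) = 0 ∧
          (∃ θ ∈ Set.Ico (0 : ℝ) (2 * π),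
            c * Real.log n ≤ |(M.eval (Complex.exp (θ * Complex.I))).im|) ∧
          (∀ θ ∈ Set.Ico (0 : ℝ) (2 * π),
            |(M.eval (Complex.exp (θ * Complex.I))).im| ≤ C * Real.log n) := by
  refine ⟨1/5, 2/5, 3, by norm_num, by norm_num, ?_⟩
  intro n hn
  have hn0 : 0 < n := by omega
  have hn0R : (0 : ℝ) < n := by exact_mod_cast hn0
  have hn3R : (3 : ℝ) ≤ n := by exact_mod_cast hn
  set r : ℝ := 1 - 1 / n with hr_def
  have hr0 : 0 ≤ r := by
    have : 1 / (n : ℝ) ≤ 1 / 3 := by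
      apply div_le_div_of_nonneg_left one_pos.le (by norm_num) hn3R
    simp only [hr_def]; linarith
  have hr1 : r < 1 := by
    have : 0 < 1 / (n : ℝ) := by positivity
    simp only [hr_def]; linarith
  have h1r : 1 - r = 1 / n := by simp [hr_def]
  -- log n ≥ 1
  have hlogn1 : 1 ≤ Real.log n := by
    rw [Real.le_log_iff_exp_le hn0R]
    have := Real.exp_one_lt_d9
    linarith
  have hlogn0 : 0 < Real.log n := lt_of_lt_of_le one_pos hlogn1
  -- r^n ≤ 1/2
  have hrn : r ^ n ≤ 1 / 2 := by
    have h1 : r ≤ Real.exp (-(1 / n)) := by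
      have := Real.add_one_le_exp (-(1 / (n : ℝ)))
      simp only [hr_def]; linarith
    have h2 : r ^ n ≤ Real.exp (-(1 / n)) ^ n := pow_le_pow_left₀ hr0 h1 n
    have h3 : Real.exp (-(1 / (n : ℝ))) ^ n = Real.exp (-1) := by
      rw [← Real.exp_nat_mul]
      congr 1
      field_simp
    have h4 : Real.exp (-1) ≤ 1 / 2 := by
      rw [Real.exp_neg]
      have h5 : (2 : ℝ) ≤ Real.exp 1 := by
        have := Real.add_one_le_exp (1 : ℝ); linarith
      rw [inv_le_comm₀ (by positivity) (by norm_num)] at *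
      · linarith
    linarith [h2, h3 ▸ h2]
  -- coefficients and polynomial
  set a : ℕ → ℂ := fun k => (-(2/5 : ℂ) * Complex.I) * ((r : ℂ) ^ k / k) with ha_def
  have ha0 : a 0 = 0 := by simp [ha_def]
  set M : Polynomial ℂ := ∑ k ∈ Finset.range n, Polynomial.monomial k (a k) with hM_def
  have heval : ∀ z : ℂ, M.eval z = ∑ k ∈ Finset.range n, a k * z ^ k := by
    intro z
    simp [hM_def, Polynomial.eval_finset_sum, Polynomial.eval_monomial]
  -- evaluation in terms of S
  have hS : ∀ θ : ℝ, M.eval (Complex.exp (θ * Complex.I))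
      = (-(2/5 : ℂ) * Complex.I) *
        ∑ k ∈ Finset.range n, ((r : ℂ) * Complex.exp (θ * Complex.I)) ^ k / k := by
    intro θ
    rw [heval, Finset.mul_sum]
    apply Finset.sum_congr rfl
    intro k _
    rw [mul_pow, ha_def]
    ring
  -- main estimates for S
  have hbig : ∀ θ : ℝ,
      let w := (r : ℂ) * Complex.exp (θ * Complex.I)
      let S := ∑ k ∈ Finset.range n, w ^ k / k
      |S.im| ≤ π / 2 + 1/2 ∧ ‖S‖ ≤ Real.log n := by
    intro θ
    set w : ℂ := (r : ℂ) * Complex.exp (θ * Complex.I) with hw_def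
    set S : ℂ := ∑ k ∈ Finset.range n, w ^ k / k with hS_def
    have hwnorm : ‖w‖ = r := by
      rw [hw_def, norm_mul, Complex.norm_real, Real.norm_eq_abs,
        Complex.norm_exp_ofReal_mul_I, abs_of_nonneg hr0, mul_one]
    have hwle : ‖w‖ ≤ r := le_of_eq hwnorm
    have htail := LogPoly.tail_bound hr0 hr1 hwle hn0
    have htail' : ‖(-Complex.log (1 - w)) - S‖ ≤ r ^ n := by
      have : r ^ n / (1 - r) / n = r ^ n := by
        rw [h1r]; field_simp
      rw [← hS_def] at htail
      linarith [this ▸ htail]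
    constructor
    · -- imaginary part bound
      have harg : |(-Complex.log (1 - w)).im| ≤ π / 2 := by
        have hre : 0 ≤ (1 - w).re := by
          have hwre : w.re = r * Real.cos θ := by
            rw [hw_def]
            simp [Complex.mul_re, Complex.exp_ofReal_mul_I_re, Complex.exp_ofReal_mul_I_im]
          have : r * Real.cos θ ≤ r * 1 :=
            mul_le_mul_of_nonneg_left (Real.cos_le_one θ) hr0
          simp only [Complex.sub_re, Complex.one_re, hwre]
          linarith
        have := Complex.abs_arg_le_pi_div_two_iff.mpr hre
        rw [Complex.neg_im, abs_neg, Complex.log_im]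
        exact this
      have hdiff : |S.im - (-Complex.log (1 - w)).im| ≤ r ^ n := by
        have : |((-Complex.log (1 - w)) - S).im| ≤ ‖(-Complex.log (1 - w)) - S‖ :=
          Complex.abs_im_le_norm _
        rw [Complex.sub_im] at this
        rw [abs_sub_comm]
        linarith
      have := abs_sub_abs_le_abs_sub S.im (-Complex.log (1 - w)).im
      calc |S.im| ≤ |(-Complex.log (1 - w)).im| + |S.im - (-Complex.log (1 - w)).im| := by
            have := abs_sub S.im (-Complex.log (1 - w)).im
            have h := abs_add_le ((-Complex.log (1 - w)).im) (S.im - (-Complex.log (1 - w)).im)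
            calc |S.im| = |(-Complex.log (1 - w)).im + (S.im - (-Complex.log (1 - w)).im)| := by
                  ring_nf
              _ ≤ _ := h
        _ ≤ π / 2 + 1/2 := by linarith
    · -- norm bound
      have hterm : ∀ k ∈ Finset.range n, ‖w ^ k / (k : ℂ)‖ ≤ r ^ k / k := by
        intro k _
        rw [norm_div, norm_pow, hwnorm]
        simp
      calc ‖S‖ ≤ ∑ k ∈ Finset.range n, ‖w ^ k / (k : ℂ)‖ := norm_sum_le _ _
        _ ≤ ∑ k ∈ Finset.range n, r ^ k / k := Finset.sum_le_sum hterm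
        _ ≤ -Real.log (1 - r) := by
            apply Summable.sum_le_tsum (Finset.range n) (fun k _ => by positivity)
              (LogPoly.hasSum_real hr0 hr1).summable |>.trans_eq
            exact (LogPoly.hasSum_real hr0 hr1).tsum_eq
        _ = Real.log n := by
            rw [h1r, Real.log_div one_ne_zero (ne_of_gt hn0R), Real.log_one]
            ring
  refine ⟨M, ?_, ?_, ?_, ?_, ?_, ?_⟩
  · -- natDegree
    apply Polynomial.natDegree_sum_le_of_forall_le
    intro k hk
    exact (Polynomial.natDegree_monomial_le (a k)).trans (by
      have := Finset.mem_range.mp hk; omega)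
  · -- coeff 0
    rw [hM_def, Polynomial.finset_sum_coeff]
    rw [Finset.sum_eq_single 0]
    · simp [ha0]
    · intro k _ hk; simp [Polynomial.coeff_monomial, hk]
    · intro h; exact absurd (Finset.mem_range.mpr hn0) h
  · -- real part bound
    intro θ _
    rw [hS θ]
    have hb := hbig θ
    simp only at hb
    set S : ℂ := ∑ k ∈ Finset.range n, ((r : ℂ) * Complex.exp (θ * Complex.I)) ^ k / k
    have hre : ((-(2/5 : ℂ) * Complex.I) * S).re = (2/5) * S.im := by
      simp [Complex.mul_re]; try ring
    rw [hre, abs_mul, abs_of_nonneg (by norm_num : (0:ℝ) ≤ (2/5 : ℝ))]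
    have hpi := Real.pi_le_four
    nlinarith [hb.1, abs_nonneg S.im]
  · -- zero mean
    have hmean : ∀ θ : ℝ, (M.eval (Complex.exp (θ * Complex.I))).re
        = ∑ k ∈ Finset.range n, (a k * Complex.exp (((k : ℂ) * Complex.I) * θ)).re := by
      intro θ
      rw [heval, Complex.re_sum]
      apply Finset.sum_congr rfl
      intro k _
      congr 2
      rw [← Complex.exp_nat_mul]
      ring_nf
    have hint : ∀ k ∈ Finset.range n,
        IntegrableOn (fun θ : ℝ => (a k * Complex.exp (((k : ℂ) * Complex.I) * θ)).re)
          (Set.Ico (0 : ℝ) (2 * π)) := by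
      intro k _
      have hc : IntegrableOn (fun θ : ℝ => (a k * Complex.exp (((k : ℂ) * Complex.I) * θ)).re)
          (Set.Icc (0:ℝ) (2*π)) := Continuous.integrableOn_Icc (by fun_prop)
      exact hc.mono_set Set.Ico_subset_Icc_self
    calc (∫ θ in Set.Ico (0 : ℝ) (2 * π), (M.eval (Complex.exp (θ * Complex.I))).re)
        = ∫ θ in Set.Ico (0 : ℝ) (2 * π),
            ∑ k ∈ Finset.range n, (a k * Complex.exp (((k : ℂ) * Complex.I) * θ)).re := by
          apply integral_congr_ae
          filter_upwards with θ
          exact hmean θ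
      _ = ∑ k ∈ Finset.range n, ∫ θ in Set.Ico (0 : ℝ) (2 * π),
            (a k * Complex.exp (((k : ℂ) * Complex.I) * θ)).re :=
          integral_finset_sum _ hint
      _ = 0 := by
          apply Finset.sum_eq_zero
          intro k hk
          rcases Nat.eq_zero_or_pos k with hk0 | hkpos
          · simp [hk0, ha0]
          · have hintC : IntegrableOn (fun θ : ℝ => a k * Complex.exp (((k : ℂ) * Complex.I) * θ))
                (Set.Ico (0 : ℝ) (2 * π)) := by
              have hc : IntegrableOn (fun θ : ℝ => a k * Complex.exp (((k : ℂ) * Complex.I) * θ))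
                  (Set.Icc (0:ℝ) (2*π)) := Continuous.integrableOn_Icc (by fun_prop)
              exact hc.mono_set Set.Ico_subset_Icc_self
            have hswap : (∫ θ in Set.Ico (0 : ℝ) (2 * π),
                (a k * Complex.exp (((k : ℂ) * Complex.I) * θ)).re)
                = (∫ θ in Set.Ico (0 : ℝ) (2 * π),
                    a k * Complex.exp (((k : ℂ) * Complex.I) * θ)).re := by
              have := integral_re hintC
              simpa using this
            rw [hswap]
            have hIoc : (∫ θ in Set.Ico (0 : ℝ) (2 * π),
                a k * Complex.exp (((k : ℂ) * Complex.I) * θ))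
                = ∫ θ in (0 : ℝ)..(2 * π), a k * Complex.exp (((k : ℂ) * Complex.I) * θ) := by
              rw [setIntegral_congr_set Ico_ae_eq_Ioc,
                ← intervalIntegral.integral_of_le (by positivity)]
            rw [hIoc, intervalIntegral.integral_const_mul]
            have hc : ((k : ℂ) * Complex.I) ≠ 0 :=
              mul_ne_zero (Nat.cast_ne_zero.mpr hkpos.ne') Complex.I_ne_zero
            rw [integral_exp_mul_complex hc]
            have hexp : Complex.exp ((k : ℂ) * Complex.I * (2 * (π : ℂ))) = 1 := by
              have e : ((k : ℂ) * Complex.I * (2 * (π : ℂ)))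
                  = (k : ℕ) * (2 * (π : ℂ) * Complex.I) := by push_cast; ring
              rw [e]
              exact Complex.exp_nat_mul_two_pi_mul_I k
            simp [hexp]
  · -- lower bound at θ = 0
    refine ⟨0, ⟨le_refl 0, by positivity⟩, ?_⟩
    rw [hS 0]
    simp only [Complex.ofReal_zero, zero_mul, Complex.exp_zero, mul_one]
    set S : ℂ := ∑ k ∈ Finset.range n, (r : ℂ) ^ k / k with hS0
    have hSreal : S = ((∑ k ∈ Finset.range n, r ^ k / k : ℝ) : ℂ) := by
      rw [hS0]
      push_cast
      rfl
    set P : ℝ := ∑ k ∈ Finset.range n, r ^ k / k with hP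
    have hP0 : 0 ≤ P := Finset.sum_nonneg fun k _ => by positivity
    -- P ≥ log n - r^n
    have htail := LogPoly.tail_bound hr0 hr1 (le_of_eq (by
      rw [Complex.norm_real, Real.norm_eq_abs, abs_of_nonneg hr0] : ‖(r : ℂ)‖ = r)) hn0
    have hlogw : (-Complex.log (1 - (r : ℂ))).re = Real.log n := by
      have h1 : (1 - (r : ℂ)) = (((1 - r : ℝ)) : ℂ) := by push_cast; ring
      rw [h1, ← Complex.ofReal_log (by linarith)]
      simp only [Complex.neg_re, Complex.ofReal_re]
      rw [h1r, Real.log_div one_ne_zero (ne_of_gt hn0R), Real.log_one]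
      ring
    have hSre : (∑ k ∈ Finset.range n, (r : ℂ) ^ k / (k : ℂ)).re = P := by
      rw [← hS0, hSreal]; simp
    have hPbound : Real.log n - r ^ n ≤ P := by
      have h2 : |(-Complex.log (1 - (r : ℂ)) - ∑ k ∈ Finset.range n, (r : ℂ) ^ k / k).re|
          ≤ r ^ n := by
        refine (Complex.abs_re_le_norm _).trans ?_
        refine htail.trans ?_
        rw [h1r]
        have : r ^ n / (1 / (n:ℝ)) / n = r ^ n := by field_simp
        linarith [this.le]
      rw [Complex.sub_re, hlogw, hSre] at h2
      have := abs_le.mp h2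
      linarith [this.1]
    have him : ((-(2/5 : ℂ) * Complex.I) * S).im = -(2/5) * S.re := by
      simp [Complex.mul_im]; try ring
    rw [him, hSreal]
    simp only [Complex.ofReal_re]
    rw [abs_mul, abs_of_nonneg hP0]
    have : |(-(2/5) : ℝ)| = 2/5 := by norm_num
    rw [this]
    have hP2 : (1/2) * Real.log n ≤ P := by
      have : r ^ n ≤ 1/2 := hrn
      linarith [hlogn1]
    linarith [hP2]
  · -- upper bound
    intro θ _
    rw [hS θ]
    have hb := hbig θ
    simp only at hb
    set S : ℂ := ∑ k ∈ Finset.range n, ((r : ℂ) * Complex.exp (θ * Complex.I)) ^ k / k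
    have him : ((-(2/5 : ℂ) * Complex.I) * S).im = -(2/5) * S.re := by
      simp [Complex.mul_im]; try ring
    rw [him, abs_mul]
    have : |(-(2/5) : ℝ)| = 2/5 := by norm_num
    rw [this]
    have hSre : |S.re| ≤ ‖S‖ := Complex.abs_re_le_norm S
    nlinarith [hb.2, abs_nonneg S.re]
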